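/- Let x, y be points of the upper half-space ℍⁿ with |x−y| > √((xₙ−yₙ)² + |xₙ²−yₙ²|). Then c̃_{ℍⁿ}(x,y) = 2·√((|x−y|² − (xₙ−yₙ)²) / (|x−y|² + 4·xₙ·yₙ)). Equivalently, in this case inf_{z∈∂ℍⁿ} max{|x−z|, |y−z|} = (|x−y|/2)·√((|x−y|² + 4·xₙ·yₙ) / (|x−y|² − (xₙ−yₙ)²)). -/

import Mathlib

open Metric Set

noncomputable def stmt7proj {n : ℕ} (u : EuclideanSpace ℝ (Fin (n + 1))) :
    EuclideanSpace ℝ (Fin (n + 1)) :=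
  WithLp.toLp 2 (fun i => if i = Fin.last n then 0 else u i)

lemma stmt7_dist_sq {n : ℕ} (u v : EuclideanSpace ℝ (Fin (n + 1))) :
    dist u v ^ 2 = ∑ i, (u i - v i) ^ 2 := by
  rw [EuclideanSpace.dist_eq, Real.sq_sqrt (by positivity)]
  simp [Real.dist_eq, sq_abs]

lemma stmt7_dist_sq_split {n : ℕ} (u v : EuclideanSpace ℝ (Fin (n + 1))) :
    dist u v ^ 2 = dist (stmt7proj u) (stmt7proj v) ^ 2
      + (u (Fin.last n) - v (Fin.last n)) ^ 2 := by
  rw [stmt7_dist_sq, stmt7_dist_sq,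
    ← Finset.sum_erase_add _ _ (Finset.mem_univ (Fin.last n)),
    ← Finset.sum_erase_add _ _ (Finset.mem_univ (Fin.last n))]
  have h1 : (stmt7proj u (Fin.last n) - stmt7proj v (Fin.last n)) ^ 2 = 0 := by
    simp [stmt7proj]
  rw [h1, add_zero]
  congr 1
  refine Finset.sum_congr rfl fun i hi => ?_
  simp [stmt7proj, Finset.ne_of_mem_erase hi]


/-- The upper half-space `ℍⁿ = {x ∈ ℝⁿ : xₙ > 0}` (dimension `n + 1 ≥ 1`). -/
def upperHalfSpace (n : ℕ) : Set (EuclideanSpace ℝ (Fin (n + 1))) :=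
  {x | 0 < x (Fin.last n)}

/-- Its boundary `∂ℍⁿ = {x ∈ ℝⁿ : xₙ = 0}`. -/
def upperHalfSpaceBdry (n : ℕ) : Set (EuclideanSpace ℝ (Fin (n + 1))) :=
  {x | x (Fin.last n) = 0}

/-- The new hyperbolic type metric on the upper half-space:
`c̃_{ℍⁿ}(x,y) = |x−y| / inf_{z∈∂ℍⁿ} max{|x−z|, |y−z|}`. -/
noncomputable def ctildeH {n : ℕ} (x y : EuclideanSpace ℝ (Fin (n + 1))) : ℝ :=
  dist x y / sInf ((fun z => max (dist x z) (dist y z)) '' upperHalfSpaceBdry n)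

/-- If `x, y ∈ ℍⁿ` and `|x−y| > √((xₙ−yₙ)² + |xₙ²−yₙ²|)`, then
`c̃_{ℍⁿ}(x,y) = 2·√((|x−y|² − (xₙ−yₙ)²)/(|x−y|² + 4 xₙ yₙ))`; equivalently
`inf_{z∈∂ℍⁿ} max{|x−z|,|y−z|} = (|x−y|/2)·√((|x−y|² + 4 xₙ yₙ)/(|x−y|² − (xₙ−yₙ)²))`. -/
theorem stmt_7 {n : ℕ} (x y : EuclideanSpace ℝ (Fin (n + 1)))
    (hx : x ∈ upperHalfSpace n) (hy : y ∈ upperHalfSpace n)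
    (h : Real.sqrt ((x (Fin.last n) - y (Fin.last n)) ^ 2 +
        |x (Fin.last n) ^ 2 - y (Fin.last n) ^ 2|) < dist x y) :
    ctildeH x y =
      2 * Real.sqrt ((dist x y ^ 2 - (x (Fin.last n) - y (Fin.last n)) ^ 2) /
        (dist x y ^ 2 + 4 * x (Fin.last n) * y (Fin.last n))) ∧
    sInf ((fun z => max (dist x z) (dist y z)) '' upperHalfSpaceBdry n) =
      (dist x y / 2) * Real.sqrt ((dist x y ^ 2 + 4 * x (Fin.last n) * y (Fin.last n)) /
        (dist x y ^ 2 - (x (Fin.last n) - y (Fin.last n)) ^ 2)) := by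
  have ha : (0:ℝ) < x (Fin.last n) := hx
  have hb : (0:ℝ) < y (Fin.last n) := hy
  set a : ℝ := x (Fin.last n) with ha_def
  set b : ℝ := y (Fin.last n) with hb_def
  set d : ℝ := dist x y with hd_def
  have hd0 : 0 < d := lt_of_le_of_lt (Real.sqrt_nonneg _) h
  have hcond : (a - b) ^ 2 + |a ^ 2 - b ^ 2| < d ^ 2 := (Real.sqrt_lt' hd0).mp h
  set u : ℝ := d ^ 2 - (a - b) ^ 2 with hu_def
  have hu1 : |a ^ 2 - b ^ 2| < u := by rw [hu_def]; linarith
  have hu1a : a ^ 2 - b ^ 2 < u := lt_of_le_of_lt (le_abs_self _) hu1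
  have hu1b : b ^ 2 - a ^ 2 < u := lt_of_le_of_lt (le_abs_self _) (by rwa [abs_sub_comm] at hu1)
  have hu : 0 < u := lt_of_le_of_lt (abs_nonneg _) hu1
  set L : ℝ := Real.sqrt u with hL_def
  have hL : 0 < L := Real.sqrt_pos.mpr hu
  have hL2 : L ^ 2 = u := Real.sq_sqrt hu.le
  set t : ℝ := (u + b ^ 2 - a ^ 2) / (2 * L) with ht_def
  have h2lt : 2 * L * t = u + b ^ 2 - a ^ 2 := by
    rw [ht_def]; field_simp
  have ht0 : 0 < t := by
    rw [ht_def]; exact div_pos (by linarith) (by linarith)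
  have htL : t < L := by
    nlinarith [h2lt, hL2]
  set m : ℝ := Real.sqrt (t ^ 2 + a ^ 2) with hm_def
  have hm2 : m ^ 2 = t ^ 2 + a ^ 2 := Real.sq_sqrt (by positivity)
  have hm0 : 0 < m := Real.sqrt_pos.mpr (by positivity)
  have hm2' : m ^ 2 = (L - t) ^ 2 + b ^ 2 := by
    rw [hm2]; nlinarith [h2lt, hL2]
  -- distance between horizontal projections of x and y is L
  have hpxy : dist (stmt7proj x) (stmt7proj y) = L := by
    have hs := stmt7_dist_sq_split x y
    have h2 : dist (stmt7proj x) (stmt7proj y) ^ 2 = u := by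
      rw [hu_def, hd_def, ha_def, hb_def]; linarith [hs]
    rw [← Real.sqrt_sq (dist_nonneg (x := stmt7proj x) (y := stmt7proj y)), h2, hL_def]
  -- lower bound
  have lb : ∀ w ∈ (fun z => max (dist x z) (dist y z)) '' upperHalfSpaceBdry n, m ≤ w := by
    rintro w ⟨z, hz, rfl⟩
    have hz0 : z (Fin.last n) = 0 := hz
    have hxz : dist x z ^ 2 = dist (stmt7proj x) (stmt7proj z) ^ 2 + a ^ 2 := by
      have h' := stmt7_dist_sq_split x z
      rw [hz0, sub_zero, ← ha_def] at h'
      exact h'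
    have hyz : dist y z ^ 2 = dist (stmt7proj y) (stmt7proj z) ^ 2 + b ^ 2 := by
      have h' := stmt7_dist_sq_split y z
      rw [hz0, sub_zero, ← hb_def] at h'
      exact h'
    set p : ℝ := dist (stmt7proj x) (stmt7proj z) with hp_def
    set q : ℝ := dist (stmt7proj y) (stmt7proj z) with hq_def
    have htri : L ≤ p + q := by
      rw [hp_def, hq_def, dist_comm (stmt7proj y), ← hpxy]
      exact dist_triangle _ _ _
    by_contra hcon
    push_neg at hcon
    have h1 : dist x z < m := lt_of_le_of_lt (le_max_left _ _) hcon
    have h2 : dist y z < m := lt_of_le_of_lt (le_max_right _ _) hcon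
    have h1' : p ^ 2 < t ^ 2 := by
      have h3 := pow_lt_pow_left₀ h1 dist_nonneg (two_ne_zero)
      rw [hxz, hm2] at h3; linarith
    have h2' : q ^ 2 < (L - t) ^ 2 := by
      have h3 := pow_lt_pow_left₀ h2 dist_nonneg (two_ne_zero)
      rw [hyz, hm2'] at h3; linarith
    have hp0 : 0 ≤ p := dist_nonneg
    have hq0 : 0 ≤ q := dist_nonneg
    have hpt : p < t := lt_of_pow_lt_pow_left₀ 2 ht0.le h1'
    have hqt : q < L - t := lt_of_pow_lt_pow_left₀ 2 (by linarith) h2'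
    linarith
  -- the minimizing point
  set s : ℝ := t / L with hs_def
  set z₀ : EuclideanSpace ℝ (Fin (n + 1)) :=
    WithLp.toLp 2 (fun i => if i = Fin.last n then 0 else x i + s * (y i - x i)) with hz₀_def
  have hz₀mem : z₀ ∈ upperHalfSpaceBdry n := by
    show z₀ (Fin.last n) = 0
    simp [hz₀_def]
  set E : ℝ := ∑ i ∈ Finset.univ.erase (Fin.last n), (x i - y i) ^ 2 with hE_def
  have hEu : E = u := by
    have hs := stmt7_dist_sq x y
    rw [← Finset.sum_erase_add _ _ (Finset.mem_univ (Fin.last n))] at hs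
    rw [hu_def, hE_def, hd_def, ha_def, hb_def]; linarith [hs]
  have hxz₀ : dist x z₀ ^ 2 = t ^ 2 + a ^ 2 := by
    rw [stmt7_dist_sq,
      ← Finset.sum_erase_add _ _ (Finset.mem_univ (Fin.last n))]
    have hlast : (x (Fin.last n) - z₀ (Fin.last n)) ^ 2 = a ^ 2 := by
      simp [hz₀_def, ha_def]
    have hrest : ∑ i ∈ Finset.univ.erase (Fin.last n), (x i - z₀ i) ^ 2 = s ^ 2 * E := by
      rw [hE_def, Finset.mul_sum]
      refine Finset.sum_congr rfl fun i hi => ?_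
      have : z₀ i = x i + s * (y i - x i) := by
        simp [hz₀_def, Finset.ne_of_mem_erase hi]
      rw [this]; ring
    rw [hlast, hrest, hEu, hs_def]
    have : (t / L) ^ 2 * u = t ^ 2 := by
      rw [← hL2]; field_simp
    rw [this]
  have hyz₀ : dist y z₀ ^ 2 = (L - t) ^ 2 + b ^ 2 := by
    rw [stmt7_dist_sq,
      ← Finset.sum_erase_add _ _ (Finset.mem_univ (Fin.last n))]
    have hlast : (y (Fin.last n) - z₀ (Fin.last n)) ^ 2 = b ^ 2 := by
      simp [hz₀_def, hb_def]
    have hrest : ∑ i ∈ Finset.univ.erase (Fin.last n), (y i - z₀ i) ^ 2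
        = (1 - s) ^ 2 * E := by
      rw [hE_def, Finset.mul_sum]
      refine Finset.sum_congr rfl fun i hi => ?_
      have : z₀ i = x i + s * (y i - x i) := by
        simp [hz₀_def, Finset.ne_of_mem_erase hi]
      rw [this]; ring
    rw [hlast, hrest, hEu, hs_def]
    have : (1 - t / L) ^ 2 * u = (L - t) ^ 2 := by
      rw [← hL2]; field_simp
    rw [this]
  have hdx : dist x z₀ = m := by
    rw [← Real.sqrt_sq (dist_nonneg (x := x) (y := z₀)), hxz₀, hm_def]
  have hdy : dist y z₀ = m := by
    rw [← Real.sqrt_sq (dist_nonneg (x := y) (y := z₀)), hyz₀, hm_def,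
      ← hm2, hm2']
  have hmem : m ∈ (fun z => max (dist x z) (dist y z)) '' upperHalfSpaceBdry n :=
    ⟨z₀, hz₀mem, by simp [hdx, hdy]⟩
  have hSinf : sInf ((fun z => max (dist x z) (dist y z)) '' upperHalfSpaceBdry n) = m :=
    le_antisymm (csInf_le ⟨m, lb⟩ hmem) (le_csInf ⟨m, hmem⟩ lb)
  set A : ℝ := d ^ 2 + 4 * a * b with hA_def
  have hA : 0 < A := by rw [hA_def]; positivity
  clear_value a b d u L t m A
  have h4 : 4 * u * t ^ 2 = (u + b ^ 2 - a ^ 2) ^ 2 := by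
    have h' : (2 * L * t) ^ 2 = (u + b ^ 2 - a ^ 2) ^ 2 := by rw [h2lt]
    linear_combination h' - 4 * t ^ 2 * hL2
  have key : (t ^ 2 + a ^ 2) * (4 * u) = d ^ 2 * A := by
    have hud : u = d ^ 2 - (a - b) ^ 2 := hu_def
    have hAd : A = d ^ 2 + 4 * a * b := hA_def
    linear_combination h4 + (u + d ^ 2 + (a + b) ^ 2) * hud - d ^ 2 * hAd
  have hM2 : ((d / 2) * Real.sqrt (A / u)) ^ 2 = t ^ 2 + a ^ 2 := by
    rw [mul_pow, Real.sq_sqrt (by positivity)]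
    field_simp
    linear_combination (-1 : ℝ) * key
  have hmeq : m = (d / 2) * Real.sqrt (A / u) := by
    rw [hm_def, ← hM2, Real.sqrt_sq (by positivity)]
  constructor
  · have hsq : Real.sqrt (A / u) * Real.sqrt (u / A) = 1 := by
      rw [← Real.sqrt_mul (by positivity)]
      rw [show A / u * (u / A) = 1 by field_simp]
      exact Real.sqrt_one
    have hMpos : 0 < (d / 2) * Real.sqrt (A / u) := by
      have := Real.sqrt_pos.mpr (show 0 < A / u by positivity)
      positivity
    rw [ctildeH, hSinf, hmeq, div_eq_iff (ne_of_gt hMpos)]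
    rw [← hd_def]
    exact (calc 2 * Real.sqrt (u / A) * ((d / 2) * Real.sqrt (A / u))
        = d * (Real.sqrt (A / u) * Real.sqrt (u / A)) := by ring
      _ = d := by rw [hsq, mul_one]).symm
  · rw [hSinf, hmeq]
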